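/- Let M be a real symmetric positive definite L×L matrix solving the matrix Dyson equation at z = 1, i.e. M^{-1} = B^{-1} + Λ − Diag(λ⊙diag(M)), and let V := B^{1/2} be the positive definite square root of B. Let T ∈ ℝ^{L×L} be symmetric and let Δ ∈ ℝ^{L×L} be a symmetric matrix satisfying M^{-1}ΔM^{-1} = V^{-1}TV^{-1} + Diag(λ⊙diag(Δ)). Then, with w := √λ ⊙ (𝟙_L − diag(M)), the identity wᵀ·[(Diag(√λ)·B·Diag(√λ)) ⊙ Δ]·w = tr(T·(I_L − V^{-1}MV^{-1})) holds. -/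

import Mathlib

open Matrix

/-- let the real symmetric positive definite matrix `M` solve the matrix Dyson
equation at `z = 1`, `V := B^{1/2}`, and let `T, Δ` be symmetric with
`M⁻¹ Δ M⁻¹ = V⁻¹ T V⁻¹ + Diag(λ ⊙ diag Δ)`. Then, with `w := √λ ⊙ (𝟙 − diag M)`,
`wᵀ [(Diag(√λ) B Diag(√λ)) ⊙ Δ] w = tr(T (I − V⁻¹ M V⁻¹))`. -/
theorem stmt12 {L : ℕ} (hL : 0 < L) (lam : Fin L → ℝ) (hlam : ∀ l, 0 < lam l)
    (B : Matrix (Fin L) (Fin L) ℝ) (hB : B.PosDef) (hBdiag : ∀ l, B l l = 1)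
    (M : Matrix (Fin L) (Fin L) ℝ) (hMsym : Mᵀ = M) (hM : M.PosDef)
    (hMDE : M⁻¹ = B⁻¹ + Matrix.diagonal lam - Matrix.diagonal (fun l => lam l * M l l))
    (V : Matrix (Fin L) (Fin L) ℝ) (hV : V = hB.posSemidef.1.eigenvectorUnitary.1 *
      Matrix.diagonal ((↑) ∘ (√·) ∘ hB.posSemidef.1.eigenvalues) *
      (star hB.posSemidef.1.eigenvectorUnitary : Matrix (Fin L) (Fin L) ℝ))
    (T Δ : Matrix (Fin L) (Fin L) ℝ) (hT : Tᵀ = T) (hΔ : Δᵀ = Δ)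
    (hEq : M⁻¹ * Δ * M⁻¹
        = V⁻¹ * T * V⁻¹ + Matrix.diagonal (fun l => lam l * Δ l l))
    (w : Fin L → ℝ) (hw : w = fun l => Real.sqrt (lam l) * (1 - M l l)) :
    w ⬝ᵥ ((Matrix.hadamard
          (Matrix.diagonal (fun l => Real.sqrt (lam l)) * B *
            Matrix.diagonal (fun l => Real.sqrt (lam l))) Δ) *ᵥ w)
      = Matrix.trace (T * (1 - V⁻¹ * M * V⁻¹)) := by
  set e : Fin L → ℝ := fun l => lam l * (1 - M l l) with he
  set E : Matrix (Fin L) (Fin L) ℝ := Matrix.diagonal e with hE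
  set D : Matrix (Fin L) (Fin L) ℝ := Matrix.diagonal (fun l => lam l * Δ l l) with hD
  -- invertibility facts
  have hMdet : IsUnit M.det := hM.det_pos.ne'.isUnit
  have hBdet : IsUnit B.det := hB.det_pos.ne'.isUnit
  have hVV : V * V = B := by
    have hU : (star hB.posSemidef.1.eigenvectorUnitary.1 : Matrix (Fin L) (Fin L) ℝ) *
        hB.posSemidef.1.eigenvectorUnitary.1 = 1 :=
      Unitary.star_mul_self_of_mem hB.posSemidef.1.eigenvectorUnitary.2
    have hS := hB.posSemidef.1.spectral_theorem
    rw [Unitary.conjStarAlgAut_apply] at hS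
    have hD : Matrix.diagonal ((↑) ∘ (√·) ∘ hB.posSemidef.1.eigenvalues) *
        Matrix.diagonal ((↑) ∘ (√·) ∘ hB.posSemidef.1.eigenvalues)
        = Matrix.diagonal (RCLike.ofReal ∘ hB.posSemidef.1.eigenvalues : Fin L → ℝ) := by
      rw [Matrix.diagonal_mul_diagonal]
      congr 1; funext i
      simp [Real.mul_self_sqrt (hB.eigenvalues_pos i).le]
    conv_rhs => rw [hS]
    rw [hV, ← hD]
    simp only [Matrix.mul_assoc]
    rw [← Matrix.mul_assoc (star _) _ (_ * _)]
    rw [hU, Matrix.one_mul]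
  have hVdet : IsUnit V.det := by
    have hd : V.det * V.det = B.det := by rw [← det_mul, hVV]
    have h0 : V.det ≠ 0 := by
      intro h; rw [h, mul_zero] at hd; exact hB.det_pos.ne' hd.symm
    exact h0.isUnit
  have hMM : M⁻¹ * M = 1 := nonsing_inv_mul M hMdet
  have hVVi : V * V⁻¹ = 1 := mul_nonsing_inv V hVdet
  have hViV : V⁻¹ * V = 1 := nonsing_inv_mul V hVdet
  have hBB : B⁻¹ * B = 1 := nonsing_inv_mul B hBdet
  have hBB' : B * B⁻¹ = 1 := mul_nonsing_inv B hBdet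
  -- M⁻¹ = B⁻¹ + E
  have hMinv : M⁻¹ = B⁻¹ + E := by
    rw [hMDE, hE, he, add_sub_assoc, Matrix.diagonal_sub]
    have hfe : (fun i => lam i - lam i * M i i) = (fun l => lam l * (1 - M l l)) :=
      funext fun l => by ring
    rw [hfe]
  set X : Matrix (Fin L) (Fin L) ℝ := M⁻¹ * Δ * M⁻¹ - D with hXdef
  have hTeq : V * X * V = T := by
    have h : X = V⁻¹ * T * V⁻¹ := by rw [hXdef, hEq, add_sub_cancel_right]
    rw [h]
    calc V * (V⁻¹ * T * V⁻¹) * V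
        = V * (V⁻¹ * (T * (V⁻¹ * V))) := by simp only [Matrix.mul_assoc]
      _ = V * V⁻¹ * T := by rw [hViV, Matrix.mul_one, Matrix.mul_assoc]
      _ = T := by rw [hVVi, Matrix.one_mul]
  have htrT : Matrix.trace T = Matrix.trace (X * B) := by
    rw [← hTeq]
    calc Matrix.trace (V * X * V) = Matrix.trace (V * (V * X)) := Matrix.trace_mul_comm _ _
      _ = Matrix.trace (V * V * X) := by rw [Matrix.mul_assoc]
      _ = Matrix.trace (X * (V * V)) := Matrix.trace_mul_comm _ _
      _ = Matrix.trace (X * B) := by rw [hVV]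
  have htrTW : Matrix.trace (T * (V⁻¹ * M * V⁻¹)) = Matrix.trace (X * M) := by
    rw [← hTeq]
    have h2 : V * X * V * (V⁻¹ * M * V⁻¹) = V * (X * M * V⁻¹) := by
      calc V * X * V * (V⁻¹ * M * V⁻¹)
          = V * (X * (V * V⁻¹ * (M * V⁻¹))) := by simp only [Matrix.mul_assoc]
        _ = V * (X * M * V⁻¹) := by rw [hVVi, Matrix.one_mul, Matrix.mul_assoc]
    rw [h2, Matrix.trace_mul_comm]
    calc Matrix.trace (X * M * V⁻¹ * V) = Matrix.trace (X * M * (V⁻¹ * V)) := by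
          rw [Matrix.mul_assoc]
      _ = Matrix.trace (X * M) := by rw [hViV, Matrix.mul_one]
  have hXM : X * M = M⁻¹ * Δ - D * M := by
    rw [hXdef, sub_mul, Matrix.mul_assoc (M⁻¹ * Δ), hMM, Matrix.mul_one]
  have hexp : (B⁻¹ + E) * Δ * (B⁻¹ + E) * B
      = B⁻¹ * Δ * (B⁻¹ * B) + B⁻¹ * (Δ * E * B) + E * Δ * (B⁻¹ * B) + E * Δ * E * B := by
    noncomm_ring
  have htrXB : Matrix.trace (X * B)
      = Matrix.trace (B⁻¹ * Δ) + Matrix.trace (Δ * E) + Matrix.trace (E * Δ)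
        + Matrix.trace (E * Δ * E * B) - Matrix.trace (D * B) := by
    rw [hXdef, sub_mul, Matrix.trace_sub, hMinv, hexp, hBB, Matrix.mul_one, Matrix.mul_one]
    rw [Matrix.trace_add, Matrix.trace_add, Matrix.trace_add]
    have h3 : Matrix.trace (B⁻¹ * (Δ * E * B)) = Matrix.trace (Δ * E) := by
      rw [Matrix.trace_mul_comm]
      rw [Matrix.mul_assoc (Δ * E), hBB', Matrix.mul_one]
    rw [h3]
  have htrXM : Matrix.trace (X * M)
      = Matrix.trace (B⁻¹ * Δ) + Matrix.trace (E * Δ) - Matrix.trace (D * M) := by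
    rw [hXM, Matrix.trace_sub, hMinv, add_mul, Matrix.trace_add]
  -- scalar trace computations
  have htrDiag : ∀ (d : Fin L → ℝ) (A : Matrix (Fin L) (Fin L) ℝ),
      Matrix.trace (Matrix.diagonal d * A) = ∑ i, d i * A i i := by
    intro d A
    simp [Matrix.trace, Matrix.diag, Matrix.diagonal_mul]
  have htrΔE : Matrix.trace (Δ * E) = ∑ i, e i * Δ i i := by
    rw [Matrix.trace_mul_comm, hE, htrDiag]
  have htrDB : Matrix.trace (D * B) = ∑ i, lam i * Δ i i := by
    rw [hD, htrDiag]
    exact Finset.sum_congr rfl fun i _ => by rw [hBdiag i, mul_one]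
  have htrDM : Matrix.trace (D * M) = ∑ i, lam i * Δ i i * M i i := by
    rw [hD, htrDiag]
  have hcancel : Matrix.trace (Δ * E) - Matrix.trace (D * B) + Matrix.trace (D * M) = 0 := by
    rw [htrΔE, htrDB, htrDM, ← Finset.sum_sub_distrib, ← Finset.sum_add_distrib]
    apply Finset.sum_eq_zero
    intro i _
    simp only [he]
    ring
  -- RHS = trace (E * Δ * E * B)
  have hRHS : Matrix.trace (T * (1 - V⁻¹ * M * V⁻¹)) = Matrix.trace (E * Δ * E * B) := by
    rw [Matrix.mul_sub, Matrix.mul_one, Matrix.trace_sub, htrTW, htrT, htrXB, htrXM]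
    linarith [hcancel]
  rw [hRHS]
  -- both sides as double sums
  have htrE : Matrix.trace (E * Δ * E * B) = ∑ i, ∑ j, e i * Δ i j * e j * B j i := by
    have happ : ∀ i j, (E * Δ * E) i j = e i * Δ i j * e j := by
      intro i j
      rw [hE, Matrix.mul_diagonal, Matrix.diagonal_mul]
    have : Matrix.trace (E * Δ * E * B) = ∑ i, ∑ j, (E * Δ * E) i j * B j i := by
      simp [Matrix.trace, Matrix.diag, Matrix.mul_apply]
    rw [this]
    exact Finset.sum_congr rfl fun i _ => Finset.sum_congr rfl fun j _ => by rw [happ]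
  rw [htrE]
  have hs : ∀ i, Real.sqrt (lam i) * Real.sqrt (lam i) = lam i :=
    fun i => Real.mul_self_sqrt (hlam i).le
  have hBsym : ∀ i j, B j i = B i j := fun i j => by
    conv_lhs => rw [← hB.1.eq]
    simp [Matrix.conjTranspose_apply]
  simp only [dotProduct, Matrix.mulVec, Matrix.hadamard_apply,
    Matrix.mul_diagonal, Matrix.diagonal_mul, Finset.mul_sum]
  refine Finset.sum_congr rfl fun i _ => Finset.sum_congr rfl fun j _ => ?_
  rw [hw, hBsym i j]
  simp only [he]
  have h1 := hs i
  have h2 := hs j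
  linear_combination ((1 - M i i) * (1 - M j j) * Δ i j * B i j *
      (Real.sqrt (lam j) * Real.sqrt (lam j))) * h1 +
    ((1 - M i i) * (1 - M j j) * Δ i j * B i j * lam i) * h2
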